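/- arXiv:1711.09014 — 3 statements merged into one kernel-verified Lean document; each statement's English description precedes it below -/
import Mathlib

section
/- Let n ≥ 3 and 1 ≤ k ≤ n−1 be integers, and let G be a simple connected graph on n vertices with edge connectivity κ′(G) ≤ k. Then Π1(G) ≥ (n−1)^2 with equality if and only if G is isomorphic to the star S_n, and Π2(G) ≥ 4^{n−2} with equality if and only if G is isomorphic to the path P_n. -/
open SimpleGraph Finset

/-- Degree of a vertex (as `Nat.card` of its neighbor set). -/
noncomputable def mdeg {V : Type*} (G : SimpleGraph V) (v : V) : ℕ :=
  Nat.card (G.neighborSet v)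

/-- First multiplicative Zagreb index. -/
noncomputable def mZ1 {V : Type*} [Fintype V] (G : SimpleGraph V) : ℕ :=
  ∏ v : V, (mdeg G v) ^ 2

/-- Second multiplicative Zagreb index. -/
noncomputable def mZ2 {V : Type*} [Fintype V] (G : SimpleGraph V) : ℕ :=
  ∏ v : V, (mdeg G v) ^ (mdeg G v)

/-- The edge connectivity of `G` is at most `k`: some set of at most `k` edges of `G`
disconnects it. -/
def EdgeConnAtMost {V : Type*} (G : SimpleGraph V) (k : ℕ) : Prop :=
  ∃ F : Finset (Sym2 V), (↑F : Set (Sym2 V)) ⊆ G.edgeSet ∧ F.card ≤ k ∧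
    ¬ (G.deleteEdges (↑F : Set (Sym2 V))).Connected

/-- The star on `n` vertices, with center `0`. -/
def starGraphFin (n : ℕ) : SimpleGraph (Fin n) :=
  SimpleGraph.fromRel (fun u _ => u.val = 0)

section lemmas
variable {V : Type*} {G : SimpleGraph V}

lemma mdeg_eq_ncard (G : SimpleGraph V) (v : V) : mdeg G v = (G.neighborSet v).ncard :=
  Nat.card_coe_set_eq _

lemma mdeg_eq_degree [Fintype V] (G : SimpleGraph V) [DecidableRel G.Adj] (v : V) :
    mdeg G v = G.degree v := by
  rw [mdeg, Nat.card_eq_fintype_card, ← Set.toFinset_card]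
  rfl

lemma mdeg_pos [Finite V] (hG : G.Connected) (h2 : 2 ≤ Nat.card V) (v : V) :
    1 ≤ mdeg G v := by
  have : Nontrivial V := Finite.one_lt_card_iff_nontrivial.mp (by omega)
  obtain ⟨w, hw⟩ := exists_ne v
  obtain ⟨p⟩ := hG.preconnected v w
  cases p with
  | nil => exact absurd rfl hw.symm
  | cons h q =>
    rw [mdeg_eq_ncard]
    have : (G.neighborSet v).Nonempty := ⟨_, h⟩
    exact (Set.ncard_pos (Set.toFinite _)).mpr this

lemma exists_parent (hG : G.Connected) (r : V) {u : V} (hu : u ≠ r) :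
    ∃ w, G.Adj u w ∧ G.dist r w + 1 = G.dist r u := by
  obtain ⟨p, hp⟩ := hG.exists_walk_length_eq_dist u r
  cases p with
  | nil => exact absurd rfl hu
  | @cons _ x _ h q =>
    refine ⟨x, h, ?_⟩
    rw [Walk.length_cons] at hp
    have h1 : G.dist r x ≤ q.length := by
      simpa [SimpleGraph.dist_comm] using SimpleGraph.dist_le q
    have h2 : G.dist r u ≤ G.dist r x + G.dist x u :=
      hG.dist_triangle
    have h3 : G.dist x u = 1 := SimpleGraph.dist_eq_one_iff_adj.mpr h.symm
    have h4 : G.dist r u = q.length + 1 := by rw [SimpleGraph.dist_comm]; omega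
    omega

end lemmas

section sumdeg
variable {V : Type*} [Fintype V] {G : SimpleGraph V}

lemma card_edge_ge [DecidableEq V] [DecidableRel G.Adj] (hG : G.Connected) :
    Fintype.card V - 1 ≤ (G.edgeFinset).card := by
  classical
  have : Nonempty V := hG.nonempty
  obtain ⟨r⟩ := this
  have hpa : ∀ u : V, u ≠ r → ∃ w, G.Adj u w ∧ G.dist r w + 1 = G.dist r u :=
    fun u hu => exists_parent hG r hu
  let pa : V → V := fun u => if h : u ≠ r then (hpa u h).choose else u
  have hpa1 : ∀ u, u ≠ r → G.Adj u (pa u) := by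
    intro u hu; simp only [pa, dif_pos hu]; exact (hpa u hu).choose_spec.1
  have hpa2 : ∀ u, u ≠ r → G.dist r (pa u) + 1 = G.dist r u := by
    intro u hu; simp only [pa, dif_pos hu]; exact (hpa u hu).choose_spec.2
  have := Finset.card_le_card_of_injOn (f := fun u => s(u, pa u))
    (s := Finset.univ.erase r) (t := G.edgeFinset) ?_ ?_
  · rwa [Finset.card_erase_of_mem (Finset.mem_univ r), Finset.card_univ] at this
  · intro u hu
    rw [Finset.mem_coe, Finset.mem_erase] at hu
    simp only [Finset.mem_coe, SimpleGraph.mem_edgeFinset, SimpleGraph.mem_edgeSet]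
    exact hpa1 u hu.1
  · intro u hu u' hu' h
    rw [Finset.coe_erase, Set.mem_diff] at hu hu'
    have hu1 : u ≠ r := by simpa using hu.2
    have hu2 : u' ≠ r := by simpa using hu'.2
    rw [Sym2.eq_iff] at h
    rcases h with ⟨h1, _⟩ | ⟨h1, h2⟩
    · exact h1
    · have e1 := hpa2 u hu1
      have e2 := hpa2 u' hu2
      rw [← h1] at e2
      rw [h2] at e1
      omega

lemma sum_mdeg_ge (hG : G.Connected) :
    2 * (Fintype.card V - 1) ≤ ∑ v, mdeg G v := by
  classical
  have h1 : ∑ v, mdeg G v = 2 * G.edgeFinset.card := by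
    rw [← SimpleGraph.sum_degrees_eq_twice_card_edges]
    exact Finset.sum_congr rfl fun v _ => mdeg_eq_degree G v
  have := card_edge_ge hG
  omega

end sumdeg

section prodlemma
variable {α : Type*}

lemma prod_ge_sum (s : Finset α) (f : α → ℕ) (hf : ∀ i ∈ s, 1 ≤ f i) :
    ∑ i ∈ s, (f i - 1) + 1 ≤ ∏ i ∈ s, f i := by
  classical
  induction s using Finset.induction with
  | empty => simp
  | @insert a t ha ih =>
    rw [Finset.prod_insert ha, Finset.sum_insert ha]
    have hA : 1 ≤ f a := hf a (Finset.mem_insert_self a t)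
    have h1 : ∑ i ∈ t, (f i - 1) + 1 ≤ ∏ i ∈ t, f i :=
      ih fun i hi => hf i (Finset.mem_insert_of_mem hi)
    have h2 : f a * (∑ i ∈ t, (f i - 1) + 1) ≤ f a * ∏ i ∈ t, f i :=
      Nat.mul_le_mul_left _ h1
    have h3 : ∑ i ∈ t, (f i - 1) ≤ f a * ∑ i ∈ t, (f i - 1) :=
      Nat.le_mul_of_pos_left _ hA
    rw [Nat.mul_add, Nat.mul_one] at h2
    omega

lemma prod_gt_sum (s : Finset α) (f : α → ℕ) (hf : ∀ i ∈ s, 1 ≤ f i)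
    {a b : α} (has : a ∈ s) (hbs : b ∈ s) (hab : a ≠ b)
    (ha : 2 ≤ f a) (hb : 2 ≤ f b) :
    ∑ i ∈ s, (f i - 1) + 1 < ∏ i ∈ s, f i := by
  classical
  have hbe : b ∈ s.erase a := Finset.mem_erase.mpr ⟨fun h => hab h.symm, hbs⟩
  rw [← Finset.mul_prod_erase s f has, ← Finset.mul_prod_erase _ f hbe,
    ← Finset.add_sum_erase s _ has, ← Finset.add_sum_erase _ _ hbe]
  set t := (s.erase a).erase b with ht
  have h1 : ∑ i ∈ t, (f i - 1) + 1 ≤ ∏ i ∈ t, f i :=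
    prod_ge_sum t f fun i hi => hf i (Finset.mem_of_mem_erase (Finset.mem_of_mem_erase hi))
  obtain ⟨a', hA⟩ : ∃ a', f a = 2 + a' := ⟨f a - 2, by omega⟩
  obtain ⟨b', hB⟩ : ∃ b', f b = 2 + b' := ⟨f b - 2, by omega⟩
  obtain ⟨q, hQ⟩ : ∃ q, ∏ i ∈ t, f i = (∑ i ∈ t, (f i - 1) + 1) + q :=
    ⟨_, (Nat.add_sub_cancel' h1).symm⟩
  rw [hA, hB, hQ]
  set S := ∑ i ∈ t, (f i - 1)
  have g1 : 2 + a' - 1 = a' + 1 := by omega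
  have g2 : 2 + b' - 1 = b' + 1 := by omega
  rw [g1, g2]
  have m1 : (2+a')*(2+b')*(S+1) ≤ (2+a')*((2+b')*(S+1+q)) := by
    rw [mul_assoc]
    exact Nat.mul_le_mul_left _ (Nat.mul_le_mul_left _ (by omega))
  have key : a' + 1 + (b' + 1 + S) + 1 < (2+a')*(2+b')*(S+1) := by nlinarith [Nat.zero_le (a'*b'*S), Nat.zero_le (a'*S), Nat.zero_le (b'*S), Nat.zero_le (a'*b')]
  exact Nat.lt_of_lt_of_le key m1

end prodlemma

section iso
variable {V W : Type*} [Fintype V] [Fintype W] {G : SimpleGraph V} {G' : SimpleGraph W}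

lemma mdeg_map (e : G ≃g G') (v : V) : mdeg G' (e v) = mdeg G v :=
  Nat.card_congr (e.mapNeighborSet v).symm

lemma mZ1_map (e : G ≃g G') : mZ1 G = mZ1 G' := by
  rw [mZ1, mZ1, ← Equiv.prod_comp e.toEquiv (fun w => mdeg G' w ^ 2)]
  exact Finset.prod_congr rfl fun v _ => congrArg (· ^ 2) (mdeg_map e v).symm

lemma mZ2_map (e : G ≃g G') : mZ2 G = mZ2 G' := by
  rw [mZ2, mZ2, ← Equiv.prod_comp e.toEquiv (fun w => mdeg G' w ^ (mdeg G' w))]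
  refine Finset.prod_congr rfl fun v _ => ?_
  rw [show mdeg G' (e.toEquiv v) = mdeg G v from mdeg_map e v]

end iso

section star
variable {n : ℕ}

lemma starGraph_adj (hn : 3 ≤ n) (u v : Fin n) :
    (starGraphFin n).Adj u v ↔ u ≠ v ∧ (u.val = 0 ∨ v.val = 0) := by
  rw [starGraphFin, SimpleGraph.fromRel_adj]

lemma mdeg_starGraph (hn : 3 ≤ n) (v : Fin n) :
    mdeg (starGraphFin n) v = if v.val = 0 then n - 1 else 1 := by
  haveI : NeZero n := ⟨by omega⟩
  rw [mdeg_eq_ncard]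
  split_ifs with h
  · have hv : v = 0 := by ext; simpa using h
    subst hv
    have : (starGraphFin n).neighborSet 0 = {(0 : Fin n)}ᶜ := by
      ext u
      simp only [mem_neighborSet, starGraph_adj hn, Set.mem_compl_iff, Set.mem_singleton_iff]
      constructor
      · rintro ⟨h1, _⟩ h2; exact h1 h2.symm
      · intro h1; exact ⟨fun h2 => h1 h2.symm, Or.inl rfl⟩
    rw [this]
    have := Set.ncard_add_ncard_compl ({(0 : Fin n)} : Set (Fin n)) (Set.toFinite _) (Set.toFinite _)
    rw [Set.ncard_singleton, Nat.card_eq_fintype_card, Fintype.card_fin] at this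
    omega
  · have : (starGraphFin n).neighborSet v = {(0 : Fin n)} := by
      ext u
      simp only [mem_neighborSet, starGraph_adj hn, Set.mem_singleton_iff]
      constructor
      · rintro ⟨h1, h2 | h2⟩
        · exact absurd h2 h
        · ext; simpa using h2
      · intro h1; subst h1
        exact ⟨fun h2 => h (by rw [h2]; rfl), Or.inr rfl⟩
    rw [this, Set.ncard_singleton]

lemma mZ1_starGraph (hn : 3 ≤ n) : mZ1 (starGraphFin n) = (n - 1) ^ 2 := by
  haveI : NeZero n := ⟨by omega⟩
  rw [mZ1]
  rw [Finset.prod_eq_single (0 : Fin n)]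
  · rw [mdeg_starGraph hn]; simp
  · intro b _ hb
    rw [mdeg_starGraph hn]
    have : ¬ b.val = 0 := fun h => hb (by ext; simpa using h)
    rw [if_neg this, one_pow]
  · simp

end star

lemma star_iso {n : ℕ} (hn : 3 ≤ n) (G : SimpleGraph (Fin n)) (c : Fin n)
    (hc : mdeg G c = n - 1) (ho : ∀ u, u ≠ c → mdeg G u = 1) :
    Nonempty (G ≃g starGraphFin n) := by
  haveI : NeZero n := ⟨by omega⟩
  have hNc : G.neighborSet c = {c}ᶜ := by
    apply Set.eq_of_subset_of_ncard_le
    · intro u hu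
      simp only [Set.mem_compl_iff, Set.mem_singleton_iff]
      exact fun h => G.irrefl (h ▸ hu)
    · have := Set.ncard_add_ncard_compl ({c} : Set (Fin n)) (Set.toFinite _) (Set.toFinite _)
      rw [Set.ncard_singleton, Nat.card_eq_fintype_card, Fintype.card_fin] at this
      rw [← mdeg_eq_ncard, hc]; omega
    · exact Set.toFinite _
  have hadjc : ∀ u : Fin n, u ≠ c → G.Adj c u := by
    intro u hu
    have : u ∈ G.neighborSet c := by rw [hNc]; simpa using hu
    exact this
  have hadj : ∀ u v, G.Adj u v ↔ u ≠ v ∧ (u = c ∨ v = c) := by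
    intro u v
    constructor
    · intro h
      refine ⟨h.ne, ?_⟩
      by_contra hcc
      push_neg at hcc
      obtain ⟨h1, h2⟩ := hcc
      have hcu : c ∈ G.neighborSet u := (hadjc u h1).symm
      have hvu : v ∈ G.neighborSet u := h
      have hsub : ({c, v} : Set (Fin n)) ⊆ G.neighborSet u := by
        intro x hx
        rcases hx with hx | hx
        · exact hx ▸ hcu
        · exact hx ▸ hvu
      have h2' := Set.ncard_le_ncard hsub (Set.toFinite _)
      rw [Set.ncard_pair (fun h => h2 h.symm)] at h2'
      rw [← mdeg_eq_ncard, ho u h1] at h2'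
      omega
    · rintro ⟨hne, h | h⟩
      · exact h ▸ hadjc v (fun hv => hne (h.trans hv.symm))
      · exact (h ▸ hadjc u (fun hu => hne (hu.trans h.symm))).symm
  have hs : ∀ u : Fin n, Equiv.swap c 0 u = 0 ↔ u = c := by
    intro u
    rw [Equiv.swap_apply_eq_iff, Equiv.swap_apply_right]
  refine ⟨{ toEquiv := Equiv.swap c 0, map_rel_iff' := ?_ }⟩
  intro u v
  rw [starGraph_adj hn, hadj]
  have hv : ∀ a : Fin n, a.val = 0 ↔ a = 0 := fun a => by rw [Fin.ext_iff, Fin.val_zero]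
  simp only [hv]
  constructor
  · rintro ⟨h1, h2⟩
    refine ⟨fun h => h1 (h ▸ rfl), ?_⟩
    rcases h2 with h2 | h2
    · exact Or.inl ((hs u).mp h2)
    · exact Or.inr ((hs v).mp h2)
  · rintro ⟨h1, h2⟩
    refine ⟨fun h => h1 (Equiv.injective _ h), ?_⟩
    rcases h2 with h2 | h2
    · exact Or.inl ((hs u).mpr h2)
    · exact Or.inr ((hs v).mpr h2)

section pow4

lemma pow4_le (d : ℕ) (hd : 1 ≤ d) : 4 ^ (d - 1) ≤ d ^ d := by
  match d with
  | 1 => norm_num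
  | 2 => norm_num
  | 3 => norm_num
  | (m + 4) =>
    calc 4 ^ (m + 4 - 1) ≤ 4 ^ (m + 4) := Nat.pow_le_pow_right (by norm_num) (by omega)
    _ ≤ (m + 4) ^ (m + 4) := Nat.pow_le_pow_left (by omega) _

lemma pow4_eq (d : ℕ) (hd : 1 ≤ d) (h : 4 ^ (d - 1) = d ^ d) : d ≤ 2 := by
  match d with
  | 1 => norm_num
  | 2 => norm_num
  | 3 => norm_num at h
  | (m + 4) =>
    exfalso
    have h1 : 4 ^ (m + 4 - 1) < 4 ^ (m + 4) :=
      Nat.pow_lt_pow_right (by norm_num) (by omega)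
    have h2 : 4 ^ (m + 4) ≤ (m + 4) ^ (m + 4) := Nat.pow_le_pow_left (by omega) _
    omega

end pow4

section path
variable {n : ℕ}

lemma mdeg_pathGraph (hn : 3 ≤ n) (v : Fin n) :
    mdeg (pathGraph n) v = if v.val = 0 ∨ v.val = n - 1 then 1 else 2 := by
  rw [mdeg_eq_ncard]
  split_ifs with h
  · rcases h with h | h
    · have : (pathGraph n).neighborSet v = {(⟨1, by omega⟩ : Fin n)} := by
        ext u
        simp only [mem_neighborSet, pathGraph_adj, Set.mem_singleton_iff, Fin.ext_iff]
        have := u.isLt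
        omega
      rw [this, Set.ncard_singleton]
    · have : (pathGraph n).neighborSet v = {(⟨n - 2, by omega⟩ : Fin n)} := by
        ext u
        simp only [mem_neighborSet, pathGraph_adj, Set.mem_singleton_iff, Fin.ext_iff]
        have := u.isLt
        have := v.isLt
        omega
      rw [this, Set.ncard_singleton]
  · push_neg at h
    have hv := v.isLt
    have : (pathGraph n).neighborSet v
        = {(⟨v.val - 1, by omega⟩ : Fin n), (⟨v.val + 1, by omega⟩ : Fin n)} := by
      ext u
      simp only [mem_neighborSet, pathGraph_adj, Set.mem_insert_iff,
        Set.mem_singleton_iff, Fin.ext_iff]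
      have := u.isLt
      omega
    rw [this, Set.ncard_pair (by simp only [ne_eq, Fin.mk.injEq]; omega)]

lemma mZ2_pathGraph (hn : 3 ≤ n) : mZ2 (pathGraph n) = 4 ^ (n - 2) := by
  classical
  rw [mZ2]
  have : ∀ v : Fin n, mdeg (pathGraph n) v ^ mdeg (pathGraph n) v
      = if v.val = 0 ∨ v.val = n - 1 then 1 else 4 := by
    intro v
    rw [mdeg_pathGraph hn]
    split_ifs <;> norm_num
  rw [Finset.prod_congr rfl fun v _ => this v]
  rw [Finset.prod_ite]
  rw [Finset.prod_const, Finset.prod_const, one_pow, one_mul]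
  congr 1
  have hcard : (Finset.univ.filter fun v : Fin n => v.val = 0 ∨ v.val = n - 1).card = 2 := by
    have : (Finset.univ.filter fun v : Fin n => v.val = 0 ∨ v.val = n - 1)
        = {(⟨0, by omega⟩ : Fin n), (⟨n - 1, by omega⟩ : Fin n)} := by
      ext u
      simp only [Finset.mem_filter, Finset.mem_univ, true_and, Finset.mem_insert,
        Finset.mem_singleton, Fin.ext_iff]
    rw [this, Finset.card_insert_of_notMem, Finset.card_singleton]
    simp only [Finset.mem_singleton, Fin.ext_iff]
    omega
  have := Finset.card_filter_add_card_filter_not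
    (s := (Finset.univ : Finset (Fin n))) (p := fun v : Fin n => v.val = 0 ∨ v.val = n - 1)
  rw [Finset.card_univ, Fintype.card_fin, hcard] at this
  omega

end path

lemma path_iso (hn : 3 ≤ n) (G : SimpleGraph (Fin n)) (hG : G.Connected)
    (r : Fin n) (hr : mdeg G r = 1) (h2 : ∀ v, mdeg G v ≤ 2) :
    Nonempty (G ≃g pathGraph n) := by
  have key : ∀ d : ℕ, ∀ u w : Fin n, G.dist r u = d → G.dist r w = d → u = w := by
    intro d
    induction d using Nat.strong_induction_on with
    | _ d ih =>
      match d with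
      | 0 =>
        intro u w hu hw
        have hu' : r = u := (hG.dist_eq_zero_iff).mp hu
        have hw' : r = w := (hG.dist_eq_zero_iff).mp hw
        rw [← hu', ← hw']
      | 1 =>
        intro u w hu hw
        have hu' : G.Adj r u := SimpleGraph.dist_eq_one_iff_adj.mp hu
        have hw' : G.Adj r w := SimpleGraph.dist_eq_one_iff_adj.mp hw
        obtain ⟨a, ha⟩ := Set.ncard_eq_one.mp ((mdeg_eq_ncard G r) ▸ hr)
        have h1 : u ∈ G.neighborSet r := hu'
        have h2 : w ∈ G.neighborSet r := hw'
        rw [ha, Set.mem_singleton_iff] at h1 h2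
        rw [h1, h2]
      | (d + 2) =>
        intro u w hu hw
        have hur : u ≠ r := by
          intro h; rw [h, SimpleGraph.dist_self] at hu; omega
        have hwr : w ≠ r := by
          intro h; rw [h, SimpleGraph.dist_self] at hw; omega
        obtain ⟨pu, hpu, hdu⟩ := exists_parent hG r hur
        obtain ⟨pw, hpw, hdw⟩ := exists_parent hG r hwr
        have hpp : pu = pw := ih (d + 1) (by omega) pu pw (by omega) (by omega)
        subst hpp
        have hpr : pu ≠ r := by
          intro h; rw [h, SimpleGraph.dist_self] at hdu; omega
        obtain ⟨q, hq, hdq⟩ := exists_parent hG r hpr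
        by_contra hne
        have hqu : q ≠ u := by
          intro h; rw [h] at hdq; omega
        have hqw : q ≠ w := by
          intro h; rw [h] at hdq; omega
        have hsub : ({u, w, q} : Set (Fin n)) ⊆ G.neighborSet pu := by
          intro x hx
          rcases hx with hx | hx | hx
          · exact hx ▸ hpu.symm
          · exact hx ▸ hpw.symm
          · exact hx ▸ hq
        have hc3 : ({u, w, q} : Set (Fin n)).ncard = 3 := by
          rw [Set.ncard_insert_of_notMem (by simp [hne, hqu.symm]) (Set.toFinite _),
            Set.ncard_insert_of_notMem (by simp [hqw.symm]) (Set.toFinite _),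
            Set.ncard_singleton]
        have hle := Set.ncard_le_ncard hsub (Set.toFinite _)
        have := h2 pu
        rw [mdeg_eq_ncard] at this
        omega
  have hlt : ∀ u : Fin n, G.dist r u < n := by
    intro u
    obtain ⟨p, hp, hlen⟩ := hG.exists_path_of_dist r u
    have := hp.length_lt
    rw [Fintype.card_fin] at this
    omega
  let f : Fin n → Fin n := fun u => ⟨G.dist r u, hlt u⟩
  have hinj : Function.Injective f := by
    intro u w h
    simp only [f, Fin.mk.injEq] at h
    exact key _ u w rfl h.symm
  have hbij : Function.Bijective f := Finite.injective_iff_bijective.mp hinj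
  have hadj : ∀ u w : Fin n, G.Adj u w ↔
      (G.dist r u + 1 = G.dist r w ∨ G.dist r w + 1 = G.dist r u) := by
    intro u w
    constructor
    · intro h
      have h1 : G.dist u w = 1 := SimpleGraph.dist_eq_one_iff_adj.mpr h
      have t1 : G.dist r w ≤ G.dist r u + G.dist u w := hG.dist_triangle
      have t2 : G.dist r u ≤ G.dist r w + G.dist w u := hG.dist_triangle
      have h1' : G.dist w u = 1 := SimpleGraph.dist_eq_one_iff_adj.mpr h.symm
      have hne : G.dist r u ≠ G.dist r w := by
        intro hdd
        exact h.ne (key _ u w rfl hdd.symm)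
      omega
    · rintro (h | h)
      · have hwr : w ≠ r := by
          intro hh; rw [hh, SimpleGraph.dist_self] at h; omega
        obtain ⟨pw, hpw, hdw⟩ := exists_parent hG r hwr
        have : pw = u := key (G.dist r u) pw u (by omega) rfl
        exact (this ▸ hpw).symm
      · have hur : u ≠ r := by
          intro hh; rw [hh, SimpleGraph.dist_self] at h; omega
        obtain ⟨pu, hpu, hdu⟩ := exists_parent hG r hur
        have : pu = w := key (G.dist r w) pu w (by omega) rfl
        exact this ▸ hpu
  refine ⟨{ toEquiv := Equiv.ofBijective f hbij, map_rel_iff' := ?_ }⟩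
  intro u w
  rw [pathGraph_adj]
  simp only [Equiv.ofBijective_apply, f]
  rw [hadj u w]

theorem stmt5 (n k : ℕ) (hn : 3 ≤ n) (hk1 : 1 ≤ k) (hk2 : k ≤ n - 1)
    (G : SimpleGraph (Fin n)) (hG : G.Connected) (hκ' : EdgeConnAtMost G k) :
    ((n - 1) ^ 2 ≤ mZ1 G ∧ (mZ1 G = (n - 1) ^ 2 ↔ Nonempty (G ≃g starGraphFin n))) ∧
      (4 ^ (n - 2) ≤ mZ2 G ∧
        (mZ2 G = 4 ^ (n - 2) ↔ Nonempty (G ≃g SimpleGraph.pathGraph n))) := by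
  classical
  have hcard : Fintype.card (Fin n) = n := Fintype.card_fin n
  have hd1 : ∀ v, 1 ≤ mdeg G v :=
    mdeg_pos hG (by rw [Nat.card_eq_fintype_card, hcard]; omega)
  have hsum : 2 * (n - 1) ≤ ∑ v, mdeg G v := by
    have := sum_mdeg_ge hG; rwa [hcard] at this
  have hsum1 : ∑ v : Fin n, (mdeg G v - 1) + n = ∑ v, mdeg G v := by
    calc ∑ v : Fin n, (mdeg G v - 1) + n = ∑ v : Fin n, ((mdeg G v - 1) + 1) := by
          rw [Finset.sum_add_distrib, Finset.sum_const, Finset.card_univ, hcard,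
            smul_eq_mul, mul_one]
    _ = ∑ v, mdeg G v := Finset.sum_congr rfl fun v _ => by have := hd1 v; omega
  set S1 := ∑ v : Fin n, (mdeg G v - 1) with hS1def
  have hS1 : n - 2 ≤ S1 := by omega
  have hprodge : S1 + 1 ≤ ∏ v, mdeg G v :=
    prod_ge_sum Finset.univ _ (fun i _ => hd1 i)
  have hP : n - 1 ≤ ∏ v, mdeg G v := by omega
  have hZ1 : mZ1 G = (∏ v, mdeg G v) ^ 2 := by rw [mZ1, Finset.prod_pow]
  have hZ1ge : (n - 1) ^ 2 ≤ mZ1 G := by rw [hZ1]; exact Nat.pow_le_pow_left hP 2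
  have hZ2aux : ∏ v : Fin n, 4 ^ (mdeg G v - 1) ≤ ∏ v : Fin n, (mdeg G v) ^ (mdeg G v) :=
    Finset.prod_le_prod (fun i _ => Nat.zero_le _) (fun i _ => pow4_le _ (hd1 i))
  have hprod4 : ∏ v : Fin n, 4 ^ (mdeg G v - 1) = 4 ^ S1 :=
    Finset.prod_pow_eq_pow_sum Finset.univ _ 4
  have h4mono : (4:ℕ) ^ (n - 2) ≤ 4 ^ S1 := Nat.pow_le_pow_right (by norm_num) hS1
  have hZ2ge : 4 ^ (n - 2) ≤ mZ2 G := by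
    rw [mZ2]; calc (4:ℕ) ^ (n-2) ≤ 4 ^ S1 := h4mono
    _ = ∏ v : Fin n, 4 ^ (mdeg G v - 1) := hprod4.symm
    _ ≤ _ := hZ2aux
  refine ⟨⟨hZ1ge, ?_, ?_⟩, hZ2ge, ?_, ?_⟩
  · intro heq
    have hPn : ∏ v, mdeg G v = n - 1 := by
      have h1 : (∏ v, mdeg G v) ^ 2 = (n - 1) ^ 2 := by rw [← hZ1]; exact heq
      exact Nat.pow_left_injective (by norm_num) h1
    have hequal : S1 + 1 = ∏ v, mdeg G v := by omega
    have huniq : ∀ a b : Fin n, 2 ≤ mdeg G a → 2 ≤ mdeg G b → a = b := by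
      intro a b ha hb
      by_contra hab
      exact absurd hequal.symm (Nat.ne_of_gt
        (prod_gt_sum Finset.univ _ (fun i _ => hd1 i) (Finset.mem_univ a)
          (Finset.mem_univ b) hab ha hb))
    have hsum2 : ∑ v, mdeg G v = 2 * n - 2 := by omega
    have hex : ∃ c, 2 ≤ mdeg G c := by
      by_contra hno
      push_neg at hno
      have hall : ∀ v : Fin n, mdeg G v = 1 := fun v =>
        le_antisymm (by have := hno v; omega) (hd1 v)
      have : ∑ v : Fin n, mdeg G v = n := by
        rw [Finset.sum_congr rfl fun v _ => hall v, Finset.sum_const,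
          Finset.card_univ, hcard, smul_eq_mul, mul_one]
      omega
    obtain ⟨c, hc2⟩ := hex
    have hothers : ∀ u, u ≠ c → mdeg G u = 1 := by
      intro u hu
      rcases Nat.lt_or_ge (mdeg G u) 2 with h | h
      · have := hd1 u; omega
      · exact absurd (huniq u c h hc2) hu
    have hcdeg : mdeg G c = n - 1 := by
      have hsplit : mdeg G c + ∑ v ∈ Finset.univ.erase c, mdeg G v = ∑ v, mdeg G v :=
        Finset.add_sum_erase _ _ (Finset.mem_univ c)
      have hrest : ∑ v ∈ Finset.univ.erase c, mdeg G v = n - 1 := by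
        rw [Finset.sum_congr rfl (fun v hv => hothers v (Finset.mem_erase.mp hv).1),
          Finset.sum_const, Finset.card_erase_of_mem (Finset.mem_univ c),
          Finset.card_univ, hcard, smul_eq_mul, mul_one]
      omega
    exact star_iso hn G c hcdeg hothers
  · rintro ⟨e⟩
    rw [mZ1_map e, mZ1_starGraph hn]
  · intro heq
    rw [mZ2] at heq
    have hSeq : 4 ^ S1 = 4 ^ (n - 2) := le_antisymm (by omega) h4mono
    have hS1eq : S1 = n - 2 := Nat.pow_right_injective (by norm_num) hSeq
    have hpe : ∏ v : Fin n, 4 ^ (mdeg G v - 1) = ∏ v : Fin n, (mdeg G v) ^ (mdeg G v) := by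
      omega
    have hpointwise : ∀ v : Fin n, 4 ^ (mdeg G v - 1) = (mdeg G v) ^ (mdeg G v) := by
      by_contra hno
      push_neg at hno
      obtain ⟨v0, hv0⟩ := hno
      have hstrict : ∏ v : Fin n, 4 ^ (mdeg G v - 1) < ∏ v : Fin n, (mdeg G v) ^ (mdeg G v) :=
        Finset.prod_lt_prod (fun i _ => pow_pos (by norm_num) _)
          (fun i _ => pow4_le _ (hd1 i))
          ⟨v0, Finset.mem_univ v0, lt_of_le_of_ne (pow4_le _ (hd1 v0)) hv0⟩
      omega
    have hle2 : ∀ v, mdeg G v ≤ 2 := fun v => pow4_eq _ (hd1 v) (hpointwise v)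
    have hsum2 : ∑ v, mdeg G v = 2 * n - 2 := by omega
    have hex : ∃ r, mdeg G r = 1 := by
      by_contra hno
      push_neg at hno
      have hall : ∀ v : Fin n, 2 ≤ mdeg G v := fun v => by
        have h1 := hd1 v; have h2 := hno v; omega
      have : 2 * n ≤ ∑ v : Fin n, mdeg G v := by
        calc 2 * n = ∑ _v : Fin n, 2 := by
              rw [Finset.sum_const, Finset.card_univ, hcard, smul_eq_mul, mul_comm]
        _ ≤ _ := Finset.sum_le_sum fun v _ => hall v
      omega
    obtain ⟨r, hr⟩ := hex
    exact path_iso hn G hG r hr hle2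
  · rintro ⟨e⟩
    rw [mZ2_map e, mZ2_pathGraph hn]
end

section
/- Let G be a simple connected graph on n vertices having exactly p pendant vertices, where p ≥ 2 and n ≥ p + 2. Then Π1(G) ≥ p^2 · 2^{2(n−p−1)}, with equality if and only if the degree sequence of G consists of one vertex of degree p, n−p−1 vertices of degree 2, and p vertices of degree 1 (i.e. G is a spider tree with p legs). -/
open SimpleGraph Finset

lemma reach_mono' {V : Type*} {G G' : SimpleGraph V}
    (h : ∀ ⦃x y : V⦄, G.Adj x y → G'.Reachable x y) {a b : V}
    (hr : G.Reachable a b) : G'.Reachable a b := by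
  obtain ⟨w⟩ := hr
  induction w with
  | nil => exact Reachable.refl _
  | cons h' p ih => exact (h h').trans ih

lemma conn_edges {V : Type*} [Fintype V] (G : SimpleGraph V) (hG : G.Connected) :
    Fintype.card V ≤ Nat.card G.edgeSet + 1 := by
  classical
  suffices H : ∀ k (G : SimpleGraph V), G.Connected → Nat.card G.edgeSet = k →
      Fintype.card V ≤ k + 1 from H _ G hG rfl
  intro k
  induction k using Nat.strong_induction_on with
  | _ k ih =>
    intro G hG hk
    by_cases hac : G.IsAcyclic
    · have ht : G.IsTree := ⟨hG, hac⟩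
      have h1 := ht.card_edgeFinset
      have h2 : Nat.card G.edgeSet = G.edgeFinset.card := by
        rw [Nat.card_eq_fintype_card, SimpleGraph.edgeFinset, Set.toFinset_card]
      omega
    · rw [isAcyclic_iff_forall_edge_isBridge] at hac
      push_neg at hac
      obtain ⟨e, he, hbe⟩ := hac
      revert he hbe
      induction e using Sym2.ind with | _ u v => ?_
      intro he hbe
      have hadj : G.Adj u v := (SimpleGraph.mem_edgeSet G).1 he
      have hne : u ≠ v := hadj.ne
      set G' := G \ SimpleGraph.fromEdgeSet {s(u,v)} with hG'def
      have hre : G'.Reachable u v := by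
        by_contra hr
        exact hbe hr
      have hadj' : ∀ ⦃x y : V⦄, G.Adj x y → G'.Reachable x y := by
        intro x y hxy
        by_cases hxe : s(x, y) = s(u, v)
        · rcases Sym2.eq_iff.1 hxe with ⟨rfl, rfl⟩ | ⟨rfl, rfl⟩
          · exact hre
          · exact hre.symm
        · refine SimpleGraph.Adj.reachable ?_
          simp only [hG'def, SimpleGraph.sdiff_adj, SimpleGraph.fromEdgeSet_adj,
            Set.mem_singleton_iff]
          exact ⟨hxy, fun hc => hxe hc.1⟩
      have hG'conn : G'.Connected := by
        haveI : Nonempty V := hG.nonempty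
        exact ⟨fun a b => reach_mono' hadj' (hG.preconnected a b)⟩
      have hedge : G'.edgeSet = G.edgeSet \ {s(u, v)} := by
        rw [hG'def, SimpleGraph.edgeSet_sdiff, SimpleGraph.edgeSet_fromEdgeSet]
        ext f
        simp only [Set.mem_diff, Set.mem_singleton_iff, Set.mem_setOf_eq, not_and, not_not]
        constructor
        · rintro ⟨hf, hf2⟩
          refine ⟨hf, fun hfe => ?_⟩
          subst hfe
          simp [Sym2.isDiag_iff_proj_eq] at hf2
          exact hne hf2
        · rintro ⟨hf, hf2⟩
          exact ⟨hf, fun hfe => absurd hfe hf2⟩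
      have hpos : 1 ≤ k := by
        have : 0 < Nat.card G.edgeSet := Nat.card_pos_iff.2 ⟨⟨s(u,v), he⟩, Set.toFinite _⟩
        omega
      have hcard : Nat.card G'.edgeSet = k - 1 := by
        rw [Nat.card_coe_set_eq, hedge,
          Set.ncard_diff_singleton_of_mem he, ← hk,
          Nat.card_coe_set_eq]
      have := ih (k - 1) (by omega) G' hG'conn hcard
      omega

lemma key_prod {α : Type*} [DecidableEq α] (T : Finset α) (hT : T.Nonempty) (e : α → ℕ) :
    2 ^ (T.card - 1) * (∑ v ∈ T, e v + 2) ≤ ∏ v ∈ T, (e v + 2) ∧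
    ((∏ v ∈ T, (e v + 2)) = 2 ^ (T.card - 1) * (∑ v ∈ T, e v + 2) ↔
      (T.filter fun v => e v ≠ 0).card ≤ 1) := by
  induction hT using Finset.Nonempty.cons_induction with
  | singleton a =>
    simp only [Finset.card_singleton, Finset.sum_singleton, Finset.prod_singleton,
      Nat.sub_self, pow_zero, one_mul]
    refine ⟨le_refl _, ?_⟩
    constructor
    · intro _
      exact le_trans (Finset.card_filter_le _ _) (by simp)
    · intro _
      trivial
  | cons a s ha hs ih =>
    obtain ⟨hle, hiff⟩ := ih
    have hk : 1 ≤ s.card := Finset.card_pos.2 hs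
    rw [Finset.prod_cons, Finset.sum_cons, Finset.card_cons]
    have hcard : s.card + 1 - 1 = s.card - 1 + 1 := by omega
    rw [hcard, pow_succ]
    set P := ∏ v ∈ s, (e v + 2) with hP
    set S := ∑ v ∈ s, e v with hS
    set k := s.card with hks
    have h1 : 2 * (e a + S + 2) ≤ (e a + 2) * (S + 2) := by nlinarith
    have hfil : Finset.filter (fun v => e v ≠ 0) (Finset.cons a s ha)
        = if e a ≠ 0 then insert a (s.filter fun v => e v ≠ 0)
          else s.filter fun v => e v ≠ 0 := by
      rw [Finset.cons_eq_insert, Finset.filter_insert]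
    constructor
    · calc 2 ^ (k - 1) * 2 * (e a + S + 2)
          = 2 ^ (k - 1) * (2 * (e a + S + 2)) := by ring
        _ ≤ 2 ^ (k - 1) * ((e a + 2) * (S + 2)) := Nat.mul_le_mul_left _ h1
        _ = (e a + 2) * (2 ^ (k - 1) * (S + 2)) := by ring
        _ ≤ (e a + 2) * P := Nat.mul_le_mul_left _ hle
    · constructor
      · intro heq
        -- both inequalities in the chain are equalities
        have hchain1 : (e a + 2) * (2 ^ (k - 1) * (S + 2)) ≤ (e a + 2) * P :=
          Nat.mul_le_mul_left _ hle
        have hchain2 : 2 ^ (k - 1) * (2 * (e a + S + 2)) ≤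
            2 ^ (k - 1) * ((e a + 2) * (S + 2)) := Nat.mul_le_mul_left _ h1
        have heq' : (e a + 2) * P = 2 ^ (k - 1) * (2 * (e a + S + 2)) := by
          rw [heq]; ring
        have heqP : P = 2 ^ (k - 1) * (S + 2) := by nlinarith [pow_pos (by norm_num : 0 < 2) (k-1)]
        have heas : e a * S = 0 := by
          have h2 : 2 ^ (k - 1) * (2 * (e a + S + 2)) = 2 ^ (k - 1) * ((e a + 2) * (S + 2)) := by
            nlinarith [pow_pos (by norm_num : 0 < 2) (k-1)]
          have h3 : 2 * (e a + S + 2) = (e a + 2) * (S + 2) :=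
            Nat.eq_of_mul_eq_mul_left (pow_pos (by norm_num) (k-1)) h2
          nlinarith
        have hfs : (s.filter fun v => e v ≠ 0).card ≤ 1 := hiff.1 heqP
        rw [hfil]
        rcases Nat.mul_eq_zero.1 heas with hea | hSz
        · simpa [hea] using hfs
        · have : ∀ v ∈ s, e v = 0 := by
            intro v hv
            exact (Finset.sum_eq_zero_iff.1 hSz) v hv
          have : (s.filter fun v => e v ≠ 0) = ∅ := by
            apply Finset.filter_eq_empty_iff.2
            intro v hv; simpa using this v hv
          rw [this]
          split <;> simp
      · intro hcardle
        rw [hfil] at hcardle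
        by_cases hea : e a = 0
        · have heqP : P = 2 ^ (k - 1) * (S + 2) := by
            apply hiff.2
            simpa [hea] using hcardle
          rw [hea, heqP]; ring
        · rw [if_pos hea] at hcardle
          have hanotin : a ∉ s.filter fun v => e v ≠ 0 := fun h => ha (Finset.mem_filter.1 h).1
          rw [Finset.card_insert_of_notMem hanotin] at hcardle
          have hfe : (s.filter fun v => e v ≠ 0) = ∅ := by
            rw [← Finset.card_eq_zero]; omega
          have hz : ∀ v ∈ s, e v = 0 := by
            intro v hv
            by_contra h
            have hmem : v ∈ s.filter (fun v => e v ≠ 0) := Finset.mem_filter.2 ⟨hv, h⟩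
            rw [hfe] at hmem
            simp at hmem
          have hSz : S = 0 := Finset.sum_eq_zero hz
          have hPz : P = 2 ^ k := by
            rw [hP, Finset.prod_congr rfl (fun v hv => by rw [hz v hv])]
            simp [hks]
          rw [hSz, hPz]
          have h2k : (2:ℕ) ^ k = 2 ^ (k-1) * 2 := by
            conv_lhs => rw [show k = k - 1 + 1 by omega]
            rw [pow_succ]
          rw [h2k]
          ring

theorem stmt8 (n p : ℕ) (hp : 2 ≤ p) (hn : p + 2 ≤ n)
    (G : SimpleGraph (Fin n)) (hG : G.Connected)
    (hpend : Nat.card {v : Fin n | mdeg G v = 1} = p) :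
    p ^ 2 * 2 ^ (2 * (n - p - 1)) ≤ mZ1 G ∧
      (mZ1 G = p ^ 2 * 2 ^ (2 * (n - p - 1)) ↔
        ∃ w : Fin n, mdeg G w = p ∧ ∀ v : Fin n, v ≠ w → mdeg G v = 1 ∨ mdeg G v = 2) := by
  classical
  have hn2 : 2 ≤ n := by omega
  have hdeg1 : ∀ v : Fin n, 1 ≤ mdeg G v := by
    intro v
    have hne : Nonempty (G.neighborSet v) := by
      obtain ⟨u, hu⟩ : ∃ u : Fin n, u ≠ v := by
        have h1 : 1 < Fintype.card (Fin n) := by rw [Fintype.card_fin]; omega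
        exact Fintype.exists_ne_of_one_lt_card h1 v
      obtain ⟨w⟩ := hG.preconnected v u
      cases w with
      | nil => exact absurd rfl hu
      | cons h _ => exact ⟨⟨_, h⟩⟩
    have hfin : Finite (G.neighborSet v) := Set.toFinite _
    exact Nat.card_pos
  have hdeq : ∀ v, mdeg G v = G.degree v := by
    intro v
    rw [mdeg, ← SimpleGraph.card_neighborSet_eq_degree, Nat.card_eq_fintype_card]
  have hsum : 2 * (n - 1) ≤ ∑ v, mdeg G v := by
    have h1 := conn_edges G hG
    rw [Fintype.card_fin] at h1
    have h2 : ∑ v, G.degree v = 2 * G.edgeFinset.card :=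
      SimpleGraph.sum_degrees_eq_twice_card_edges G
    have h3 : Nat.card G.edgeSet = G.edgeFinset.card := by
      rw [Nat.card_eq_fintype_card, SimpleGraph.edgeFinset, Set.toFinset_card]
    have h4 : ∑ v, mdeg G v = 2 * Nat.card G.edgeSet := by
      rw [h3, ← h2]
      exact Finset.sum_congr rfl (fun v _ => hdeq v)
    omega
  set S : Finset (Fin n) := univ.filter (fun v => mdeg G v = 1) with hSdef
  have hScard : S.card = p := by
    rw [← hpend, Nat.card_eq_fintype_card, Fintype.card_subtype]
    rfl
  set T : Finset (Fin n) := univ \ S with hTdef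
  have hTcard : T.card = n - p := by
    rw [hTdef, Finset.card_sdiff_of_subset (Finset.subset_univ S), hScard, Finset.card_univ,
      Fintype.card_fin]
  have hTne : T.Nonempty := Finset.card_pos.1 (by omega)
  have hT2 : ∀ v ∈ T, 2 ≤ mdeg G v := by
    intro v hv
    have h1 := hdeg1 v
    have h2 : mdeg G v ≠ 1 := by
      intro h
      exact (Finset.mem_sdiff.1 hv).2 (by simp [hSdef, h])
    omega
  set e : Fin n → ℕ := fun v => mdeg G v - 2 with hedef
  have hET : ∀ v ∈ T, e v + 2 = mdeg G v := by
    intro v hv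
    have := hT2 v hv
    simp only [hedef]
    omega
  obtain ⟨hKle, hKiff⟩ := key_prod T hTne e
  have hprodT : ∏ v ∈ T, (e v + 2) = ∏ v ∈ T, mdeg G v :=
    Finset.prod_congr rfl (fun v hv => hET v hv)
  have hsumS : ∑ v ∈ S, mdeg G v = p := by
    rw [Finset.sum_congr rfl (fun v hv => (Finset.mem_filter.1 hv).2 : ∀ v ∈ S, mdeg G v = 1)]
    simp [hScard]
  have hsplit : ∑ v, mdeg G v = ∑ v ∈ S, mdeg G v + ∑ v ∈ T, mdeg G v := by
    rw [hTdef, add_comm, Finset.sum_sdiff (Finset.subset_univ S)]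
  have hsumT2 : ∑ v ∈ T, mdeg G v = ∑ v ∈ T, e v + 2 * T.card := by
    rw [← Finset.sum_congr rfl hET, Finset.sum_add_distrib, Finset.sum_const, smul_eq_mul]
    ring
  have hEsum : p ≤ ∑ v ∈ T, e v + 2 := by omega
  set Q := ∏ v ∈ T, mdeg G v with hQ
  have hc1 : T.card - 1 = n - p - 1 := by omega
  have hQge : p * 2 ^ (n - p - 1) ≤ Q := by
    calc p * 2 ^ (n - p - 1) = 2 ^ (T.card - 1) * p := by rw [hc1]; ring
      _ ≤ 2 ^ (T.card - 1) * (∑ v ∈ T, e v + 2) := Nat.mul_le_mul_left _ hEsum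
      _ ≤ ∏ v ∈ T, (e v + 2) := hKle
      _ = Q := hprodT
  have hprodall : ∏ v, mdeg G v = Q := by
    rw [hQ, hTdef, ← Finset.prod_sdiff (Finset.subset_univ S)]
    have hS1 : ∏ v ∈ S, mdeg G v = 1 :=
      Finset.prod_eq_one (fun v hv => (Finset.mem_filter.1 hv).2)
    rw [hS1, mul_one]
  have hmZ1 : mZ1 G = Q ^ 2 := by
    rw [mZ1, Finset.prod_pow, hprodall]
  have hbound : p ^ 2 * 2 ^ (2 * (n - p - 1)) = (p * 2 ^ (n - p - 1)) ^ 2 := by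
    rw [mul_pow, ← pow_mul, Nat.mul_comm (n - p - 1) 2]
  refine ⟨?_, ?_, ?_⟩
  · rw [hmZ1, hbound]
    exact Nat.pow_le_pow_left hQge 2
  · intro heq
    have hQeq : Q = p * 2 ^ (n - p - 1) := by
      rw [hmZ1, hbound] at heq
      exact Nat.pow_left_injective (by norm_num) heq
    have hEeq : ∑ v ∈ T, e v + 2 = p := by
      have h5 : 2 ^ (T.card - 1) * (∑ v ∈ T, e v + 2) ≤ 2 ^ (T.card - 1) * p := by
        calc 2 ^ (T.card - 1) * (∑ v ∈ T, e v + 2) ≤ ∏ v ∈ T, (e v + 2) := hKle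
          _ = Q := hprodT
          _ = p * 2 ^ (n - p - 1) := hQeq
          _ = 2 ^ (T.card - 1) * p := by rw [hc1]; ring
      have h6 := Nat.le_of_mul_le_mul_left h5 (Nat.pow_pos (by norm_num))
      omega
    have hKeq : ∏ v ∈ T, (e v + 2) = 2 ^ (T.card - 1) * (∑ v ∈ T, e v + 2) := by
      rw [hprodT, hQeq, hEeq, hc1]
      ring
    have hfil := hKiff.1 hKeq
    by_cases hF : T.filter (fun v => e v ≠ 0) = ∅
    · have hz : ∀ v ∈ T, e v = 0 := by
        intro v hv
        by_contra h
        have hmem : v ∈ T.filter (fun v => e v ≠ 0) := Finset.mem_filter.2 ⟨hv, h⟩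
        rw [hF] at hmem
        simp at hmem
      have hSz : ∑ v ∈ T, e v = 0 := Finset.sum_eq_zero hz
      have hp2 : p = 2 := by omega
      obtain ⟨w, hw⟩ := hTne
      refine ⟨w, ?_, ?_⟩
      · have := hET w hw
        have := hz w hw
        omega
      · intro v _
        by_cases hvS : v ∈ S
        · exact Or.inl (Finset.mem_filter.1 hvS).2
        · have hvT : v ∈ T := Finset.mem_sdiff.2 ⟨Finset.mem_univ v, hvS⟩
          have h7 := hET v hvT
          have h8 := hz v hvT
          omega
    · have hFcard : (T.filter (fun v => e v ≠ 0)).card = 1 := by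
        have h9 : 0 < (T.filter (fun v => e v ≠ 0)).card :=
          Finset.card_pos.2 (Finset.nonempty_of_ne_empty hF)
        omega
      obtain ⟨w, hw⟩ := Finset.card_eq_one.1 hFcard
      have hwF : w ∈ T.filter (fun v => e v ≠ 0) := by rw [hw]; exact Finset.mem_singleton_self w
      have hwT : w ∈ T := (Finset.mem_filter.1 hwF).1
      have hsumF : ∑ v ∈ T, e v = e w := by
        rw [← Finset.sum_filter_ne_zero, hw, Finset.sum_singleton]
      refine ⟨w, ?_, ?_⟩
      · have := hET w hwT
        omega
      · intro v hv
        by_cases hvS : v ∈ S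
        · exact Or.inl (Finset.mem_filter.1 hvS).2
        · have hvT : v ∈ T := Finset.mem_sdiff.2 ⟨Finset.mem_univ v, hvS⟩
          have hvF : v ∉ T.filter (fun u => e u ≠ 0) := by
            rw [hw]
            simp [hv]
          have hev : e v = 0 := by
            by_contra h
            exact hvF (Finset.mem_filter.2 ⟨hvT, h⟩)
          have := hET v hvT
          omega
  · rintro ⟨w, hwdeg, hother⟩
    have hwT : w ∈ T := by
      refine Finset.mem_sdiff.2 ⟨Finset.mem_univ w, ?_⟩
      intro hwS
      have := (Finset.mem_filter.1 hwS).2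
      omega
    have hQeq : Q = p * 2 ^ (n - p - 1) := by
      rw [hQ, ← Finset.mul_prod_erase T _ hwT, hwdeg]
      congr 1
      have h10 : ∀ v ∈ T.erase w, mdeg G v = 2 := by
        intro v hv
        obtain ⟨hvne, hvT⟩ := Finset.mem_erase.1 hv
        have hvS : v ∉ S := (Finset.mem_sdiff.1 hvT).2
        have h11 : mdeg G v ≠ 1 := fun h => hvS (by simp [hSdef, h])
        rcases hother v hvne with h | h
        · exact absurd h h11
        · exact h
      rw [Finset.prod_congr rfl h10, Finset.prod_const,
        Finset.card_erase_of_mem hwT, hTcard]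
    rw [hmZ1, hQeq, hbound]
end

section
/- Let G be a simple connected graph on n vertices having exactly p pendant vertices, where p ≥ 2 and n ≥ p + 2, and let k ≥ 2 and 0 ≤ r ≤ n−p−1 be the unique integers with 2n−p−2 = k(n−p) + r. Then Π2(G) ≥ (k+1)^{r(k+1)} · k^{k(n−p−r)}, with equality if and only if G is a tree whose degree sequence consists of r vertices of degree k+1, n−p−r vertices of degree k, and p vertices of degree 1. -/
open SimpleGraph Finset

open Real in
lemma my_card_le_edges {V : Type*} [Fintype V] (G : SimpleGraph V) [Fintype G.edgeSet]
    (hG : G.Connected) : Fintype.card V ≤ G.edgeFinset.card + 1 := by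
  classical
  obtain ⟨root⟩ := hG.nonempty
  choose pfun hpfun using fun w : V => hG.exists_walk_length_eq_dist w root
  have hadj : ∀ w, w ≠ root → G.Adj w ((pfun w).getVert 1) := by
    intro w hw
    exact (pfun w).adj_snd (Walk.not_nil_of_ne hw)
  have hlt : ∀ w, w ≠ root → G.dist ((pfun w).getVert 1) root < G.dist w root := by
    intro w hw
    have hnn : ¬ (pfun w).Nil := Walk.not_nil_of_ne hw
    have h1 : ((pfun w).tail).length + 1 = (pfun w).length := Walk.length_tail_add_one hnn
    have h2 : G.dist ((pfun w).getVert 1) root ≤ _ := SimpleGraph.dist_le ((pfun w).tail)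
    have hpos : 0 < G.dist w root := hG.pos_dist_of_ne hw
    rw [hpfun w] at h1
    omega
  have hcard : (univ.erase root).card ≤ G.edgeFinset.card := by
    apply Finset.card_le_card_of_injOn (fun w => s(w, (pfun w).getVert 1))
    · intro w hw
      simp only [mem_coe, mem_edgeFinset, mem_edgeSet]
      exact hadj w (by simpa using hw)
    · intro a ha b hb hab
      simp only [mem_coe, mem_erase, mem_univ, and_true] at ha hb
      by_contra hne
      rw [Sym2.eq_iff] at hab
      rcases hab with ⟨h1, h2⟩ | ⟨h1, h2⟩
      · exact hne h1
      · have hA := hlt a ha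
        have hB := hlt b hb
        rw [h2] at hA
        rw [← h1] at hB
        omega
  have := Finset.card_erase_of_mem (Finset.mem_univ root)
  rw [Finset.card_univ] at this
  omega



lemma my_conn_del {V : Type*} (G : SimpleGraph V) (hG : G.Connected) {v w : V}
    (hre : (G \ fromEdgeSet {s(v, w)}).Reachable v w) :
    (G \ fromEdgeSet {s(v, w)}).Connected := by
  set G' := G \ fromEdgeSet {s(v, w)} with hG'
  have key : ∀ a b : V, G.Adj a b → G'.Reachable a b := by
    intro a b hab
    by_cases he : s(a, b) = s(v, w)
    · rw [Sym2.eq_iff] at he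
      rcases he with ⟨rfl, rfl⟩ | ⟨rfl, rfl⟩
      · exact hre
      · exact hre.symm
    · exact Adj.reachable (by simp [hG', hab, he, sdiff_adj, fromEdgeSet_adj])
  have hpre : G'.Preconnected := by
    intro a b
    obtain ⟨p⟩ := hG.preconnected a b
    induction p with
    | nil => exact Reachable.refl _
    | cons h q ih => exact (key _ _ h).trans ih
  haveI := hG.nonempty
  exact ⟨hpre⟩


lemma my_tree_of_card {V : Type*} [Fintype V] (G : SimpleGraph V) [Fintype G.edgeSet]
    (hG : G.Connected) (hc : G.edgeFinset.card + 1 = Fintype.card V) : G.IsTree := by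
  classical
  refine ⟨hG, ?_⟩
  intro u c hc'
  -- extract first edge of the cycle
  cases c with
  | nil => exact hc'.not_of_nil
  | cons hadj q =>
    rename_i b
    have hmem : s(u, b) ∈ (Walk.cons hadj q).edges := by simp
    have hib : G.Adj u b ∧ (G \ fromEdgeSet {s(u, b)}).Reachable u b := by
      show G.Adj u b ∧ (G.deleteEdges {s(u, b)}).Reachable u b
      rw [SimpleGraph.adj_and_reachable_delete_edges_iff_exists_cycle]
      exact ⟨u, Walk.cons hadj q, hc', hmem⟩
    have hconn' : (G \ fromEdgeSet {s(u, b)}).Connected := my_conn_del G hG hib.2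
    set G' := G \ fromEdgeSet {s(u, b)} with hG'
    have hE' : G'.edgeSet = G.edgeSet \ {s(u, b)} := by
      rw [hG', edgeSet_sdiff, edgeSet_fromEdgeSet]
      ext e
      simp only [Set.mem_diff, Set.mem_singleton_iff, Set.mem_setOf_eq]
      constructor
      · rintro ⟨h1, h2⟩
        refine ⟨h1, fun h3 => h2 ⟨h3, ?_⟩⟩
        rw [h3]
        simp [hadj.ne]
      · rintro ⟨h1, h2⟩
        exact ⟨h1, fun h3 => h2 h3.1⟩
    haveI : Fintype G'.edgeSet := Fintype.ofFinite _
    have hcard' : G'.edgeFinset.card + 1 = G.edgeFinset.card := by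
      have h1 : G'.edgeFinset = G.edgeFinset.erase s(u, b) := by
        ext e
        simp [edgeFinset, hE', Set.mem_toFinset, Finset.mem_erase, and_comm]
      rw [h1, Finset.card_erase_of_mem (by rw [mem_edgeFinset]; exact hadj)]
      have : 0 < G.edgeFinset.card := Finset.card_pos.mpr ⟨s(u, b), by rw [mem_edgeFinset]; exact hadj⟩
      omega
    have := my_card_le_edges G' hconn'
    omega



lemma my_chord_strict (k x : ℕ) (hk : 2 ≤ k) (hx : 1 ≤ x) (h1 : x ≠ k) (h2 : x ≠ k + 1) :
    (k:ℝ) * Real.log k + ((x:ℝ) - k) * (((k:ℝ)+1) * Real.log ((k:ℝ)+1) - (k:ℝ) * Real.log k)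
      < (x:ℝ) * Real.log x := by
  have hcvx := Real.strictConvexOn_mul_log
  have hxm : (x:ℝ) ∈ Set.Ici (0:ℝ) := Set.mem_Ici.mpr (by positivity)
  have hkm : ((k:ℝ)+1) ∈ Set.Ici (0:ℝ) := Set.mem_Ici.mpr (by positivity)
  rcases lt_or_gt_of_ne h1 with hlt | hgt
  · -- x < k
    set c : ℝ := (k:ℝ) + 1 - x with hc
    have hc2 : (2:ℝ) ≤ c := by
      have : (x:ℝ) + 1 ≤ k := by exact_mod_cast hlt
      simp [hc]; linarith
    have hne : (x:ℝ) ≠ (k:ℝ)+1 := by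
      have : (x:ℝ) < k := by exact_mod_cast hlt
      linarith
    have ha : (0:ℝ) < 1/c := by positivity
    have hb : (0:ℝ) < (c-1)/c := by
      apply div_pos <;> linarith
    have hab : 1/c + (c-1)/c = 1 := by field_simp; ring
    have hcomb : (1/c) • (x:ℝ) + ((c-1)/c) • ((k:ℝ)+1) = (k:ℝ) := by
      simp only [smul_eq_mul]
      field_simp
      ring
    have := hcvx.2 hxm hkm hne ha hb hab
    rw [hcomb] at this
    simp only [smul_eq_mul] at this
    have hc0 : c ≠ 0 := by linarith
    rw [div_mul_eq_mul_div, div_mul_eq_mul_div, ← add_div, lt_div_iff₀ (by linarith)] at this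
    rw [hc] at this
    linarith
  · -- x > k + 1
    set d : ℝ := (x:ℝ) - k with hd
    have hd2 : (2:ℝ) ≤ d := by
      have : (k:ℝ) + 2 ≤ x := by
        have : k + 2 ≤ x := by omega
        exact_mod_cast this
      simp [hd]; linarith
    have hne : (k:ℝ) ≠ (x:ℝ) := by
      have : (k:ℝ) < x := by linarith
      linarith
    have hkm0 : (k:ℝ) ∈ Set.Ici (0:ℝ) := Set.mem_Ici.mpr (by positivity)
    have ha : (0:ℝ) < (d-1)/d := by apply div_pos <;> linarith
    have hb : (0:ℝ) < 1/d := by positivity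
    have hab : (d-1)/d + 1/d = 1 := by field_simp; ring
    have hcomb : ((d-1)/d) • (k:ℝ) + (1/d) • (x:ℝ) = (k:ℝ) + 1 := by
      simp only [smul_eq_mul]
      field_simp
      ring
    have := hcvx.2 hkm0 hxm hne ha hb hab
    rw [hcomb] at this
    simp only [smul_eq_mul] at this
    rw [div_mul_eq_mul_div, div_mul_eq_mul_div, ← add_div, lt_div_iff₀ (by linarith)] at this
    rw [hd] at this ⊢
    linarith

lemma my_chord (k x : ℕ) (hk : 2 ≤ k) (hx : 1 ≤ x) :
    (k:ℝ) * Real.log k + ((x:ℝ) - k) * (((k:ℝ)+1) * Real.log ((k:ℝ)+1) - (k:ℝ) * Real.log k)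
      ≤ (x:ℝ) * Real.log x := by
  by_cases h1 : x = k
  · subst h1; ring_nf; rfl
  by_cases h2 : x = k + 1
  · subst h2; push_cast; ring_nf; rfl
  exact (my_chord_strict k x hk hx h1 h2).le


lemma nat_card_setOf {α : Type*} [Fintype α] (Q : α → Prop) [DecidablePred Q] :
    Nat.card {v | Q v} = (univ.filter Q).card := by
  rw [Nat.card_coe_set_eq, Set.ncard_eq_toFinset_card']
  congr 1
  ext v
  simp

theorem stmt9 (n p k r : ℕ) (hp : 2 ≤ p) (hn : p + 2 ≤ n)
    (hk : 2 ≤ k) (hr : r ≤ n - p - 1) (hkr : 2 * n - p - 2 = k * (n - p) + r)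
    (G : SimpleGraph (Fin n)) (hG : G.Connected)
    (hpend : Nat.card {v : Fin n | mdeg G v = 1} = p) :
    (k + 1) ^ (r * (k + 1)) * k ^ (k * (n - p - r)) ≤ mZ2 G ∧
      (mZ2 G = (k + 1) ^ (r * (k + 1)) * k ^ (k * (n - p - r)) ↔
        (G.IsTree ∧ Nat.card {v : Fin n | mdeg G v = k + 1} = r ∧
          Nat.card {v : Fin n | mdeg G v = k} = n - p - r)) := by
  classical
  have hn4 : 4 ≤ n := by omega
  haveI : Nontrivial (Fin n) := by
    apply Fintype.one_lt_card_iff_nontrivial.mp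
    simp; omega
  have hmdeg : ∀ v, mdeg G v = G.degree v := by
    intro v
    rw [mdeg, Nat.card_eq_fintype_card, card_neighborSet_eq_degree]
  have hdeg1 : ∀ v : Fin n, 1 ≤ G.degree v := by
    intro v
    obtain ⟨u, hu⟩ := exists_ne v
    obtain ⟨q⟩ := hG.preconnected v u
    have hnn : ¬q.Nil := Walk.not_nil_of_ne (Ne.symm hu)
    exact (G.degree_pos_iff_exists_adj v).mpr ⟨_, q.adj_snd hnn⟩
  -- pendant set
  have hsetP : {v : Fin n | mdeg G v = 1} = {v | G.degree v = 1} := by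
    ext v; simp [hmdeg]
  rw [hsetP, nat_card_setOf] at hpend
  set P : Finset (Fin n) := univ.filter (fun v => G.degree v = 1) with hPdef
  set T : Finset (Fin n) := univ.filter (fun v => ¬ G.degree v = 1) with hTdef
  have hPT : P.card + T.card = n := by
    rw [hPdef, hTdef, Finset.card_filter_add_card_filter_not]
    simp
  have hTcard : T.card = n - p := by omega
  have hdeg2 : ∀ v ∈ T, 2 ≤ G.degree v := by
    intro v hv
    rw [hTdef, mem_filter] at hv
    have := hdeg1 v
    omega
  -- edge counts
  have hsum : ∑ v, G.degree v = 2 * G.edgeFinset.card := G.sum_degrees_eq_twice_card_edges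
  set E := G.edgeFinset.card with hEdef
  set S := ∑ v ∈ T, G.degree v with hSdef
  have hPS : p + S = 2 * E := by
    rw [← hsum, ← hpend]
    rw [← Finset.sum_filter_add_sum_filter_not univ (fun v => G.degree v = 1)]
    congr 1
    rw [hPdef]
    rw [Finset.card_eq_sum_ones]
    apply Finset.sum_congr rfl
    intro v hv
    rw [mem_filter] at hv
    omega
  have hEn : n - 1 ≤ E := by
    have h2 := my_card_le_edges G hG
    rw [Fintype.card_fin] at h2
    omega
  -- real-analytic part
  set m := n - p with hmdef
  have hm2 : 2 ≤ m := by omega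
  have hSlb : k * m + r ≤ S := by omega
  set gk : ℝ := (k:ℝ) * Real.log k with hgk
  set gk1 : ℝ := ((k:ℝ)+1) * Real.log ((k:ℝ)+1) with hgk1
  set Δ : ℝ := gk1 - gk with hDel
  have hk0 : (0:ℝ) < (k:ℝ) := by exact_mod_cast (by omega : 0 < k)
  have hk10 : (0:ℝ) < (k:ℝ) + 1 := by linarith
  have hDpos : 0 < Δ := by
    have l1 : Real.log (k:ℝ) ≤ Real.log ((k:ℝ)+1) :=
      (Real.log_le_log_iff hk0 hk10).mpr (by linarith)
    have l2 : 0 < Real.log ((k:ℝ)+1) := Real.log_pos (by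
      have : (2:ℝ) ≤ (k:ℝ) := by exact_mod_cast hk
      linarith)
    rw [hDel, hgk1, hgk]
    nlinarith
  have hlog_pt : ∀ v ∈ T, gk + ((G.degree v : ℝ) - k) * Δ
      ≤ (G.degree v : ℝ) * Real.log (G.degree v) := by
    intro v hv
    rw [hgk, hDel, hgk1, hgk]
    exact my_chord k _ hk (hdeg1 v)
  have hScast : (S:ℝ) = ∑ v ∈ T, ((G.degree v : ℝ)) := by
    rw [hSdef]; push_cast; rfl
  have hsum_cast : ∑ v ∈ T, ((G.degree v : ℝ) - (k:ℝ)) = (S:ℝ) - (m:ℝ) * k := by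
    rw [Finset.sum_sub_distrib, Finset.sum_const, nsmul_eq_mul, hTcard, hScast]
  have hL : ∑ v ∈ T, (gk + ((G.degree v:ℝ) - k) * Δ)
      = (m:ℝ) * gk + ((S:ℝ) - (m:ℝ)*k) * Δ := by
    rw [Finset.sum_add_distrib, Finset.sum_const, nsmul_eq_mul, hTcard, ← Finset.sum_mul,
      hsum_cast]
    try push_cast
    try ring
  have hZcast : (mZ2 G : ℝ) = ∏ v : Fin n, ((G.degree v : ℝ))^(G.degree v) := by
    rw [mZ2, Nat.cast_prod]
    apply Finset.prod_congr rfl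
    intro v _
    rw [hmdeg, Nat.cast_pow]
  have hdegne : ∀ v : Fin n, ((G.degree v : ℝ)) ≠ 0 := by
    intro v
    have := hdeg1 v
    exact_mod_cast (by omega : G.degree v ≠ 0)
  have hlogZ : Real.log (mZ2 G : ℝ)
      = ∑ v ∈ T, (G.degree v:ℝ) * Real.log (G.degree v) := by
    rw [hZcast, Real.log_prod (fun v _ => pow_ne_zero _ (hdegne v))]
    have : ∀ v : Fin n, Real.log ((G.degree v:ℝ) ^ (G.degree v))
        = (G.degree v:ℝ) * Real.log (G.degree v) := by
      intro v
      rw [Real.log_pow]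
    simp only [this]
    rw [← Finset.sum_filter_add_sum_filter_not univ (fun v => G.degree v = 1)]
    rw [← hPdef, ← hTdef]
    have : ∑ v ∈ P, (G.degree v:ℝ) * Real.log (G.degree v) = 0 := by
      apply Finset.sum_eq_zero
      intro v hv
      rw [hPdef, mem_filter] at hv
      rw [hv.2]
      simp
    rw [this, zero_add]
  have hZpos : 0 < mZ2 G := by
    rw [mZ2]
    apply Finset.prod_pos
    intro v _
    have := hdeg1 v
    rw [hmdeg]
    positivity
  set B := (k+1)^(r*(k+1)) * k^(k*(n-p-r)) with hB
  have hBpos : 0 < B := by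
    rw [hB]; positivity
  have hcast1 : ((n - p - r : ℕ):ℝ) = (m:ℝ) - (r:ℝ) := by
    have h : (n - p - r) + r = m := by omega
    have h2 := congrArg (Nat.cast : ℕ → ℝ) h
    push_cast at h2
    linarith
  have hBcast : (B:ℝ) = ((k:ℝ)+1)^(r*(k+1)) * (k:ℝ)^(k*(n-p-r)) := by
    rw [hB]; push_cast; ring
  have hlogB : Real.log (B:ℝ) = (m:ℝ) * gk + (r:ℝ) * Δ := by
    rw [hBcast, Real.log_mul (pow_ne_zero _ (by linarith)) (pow_ne_zero _ (by linarith)),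
      Real.log_pow, Real.log_pow]
    push_cast [hcast1]
    rw [hDel, hgk1, hgk]
    ring
  have hrS : (r:ℝ) ≤ (S:ℝ) - (m:ℝ)*k := by
    have : ((k*m + r : ℕ):ℝ) ≤ (S:ℝ) := by exact_mod_cast hSlb
    push_cast at this
    linarith
  have hchain : Real.log (B:ℝ) ≤ Real.log (mZ2 G : ℝ) := by
    rw [hlogB, hlogZ]
    calc (m:ℝ) * gk + (r:ℝ) * Δ ≤ (m:ℝ) * gk + ((S:ℝ) - (m:ℝ)*k) * Δ := by
          have h := mul_le_mul_of_nonneg_right hrS hDpos.le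
          linarith
      _ = ∑ v ∈ T, (gk + ((G.degree v:ℝ) - k) * Δ) := hL.symm
      _ ≤ ∑ v ∈ T, (G.degree v:ℝ) * Real.log (G.degree v) := Finset.sum_le_sum hlog_pt
  have hle : B ≤ mZ2 G := by
    have := (Real.log_le_log_iff (by exact_mod_cast hBpos) (by exact_mod_cast hZpos)).mp hchain
    exact_mod_cast this
  -- degree-set descriptions
  have hsetK : ∀ c : ℕ, {v : Fin n | mdeg G v = c} = {v | G.degree v = c} := by
    intro c; ext v; simp [hmdeg]
  -- backward direction of the equality case
  have hback : (univ.filter (fun v => G.degree v = k+1)).card = r →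
      (univ.filter (fun v => G.degree v = k)).card = n - p - r → mZ2 G = B := by
    intro hA hBc
    set A' : Finset (Fin n) := univ.filter (fun v => G.degree v = k+1) with hA'def
    set B' : Finset (Fin n) := univ.filter (fun v => G.degree v = k) with hB'def
    have hd1 : Disjoint A' B' := by
      rw [Finset.disjoint_left]
      intro a ha hb
      rw [hA'def, mem_filter] at ha
      rw [hB'def, mem_filter] at hb
      omega
    have hd2 : Disjoint (A' ∪ B') P := by
      rw [Finset.disjoint_left]
      intro a ha hb
      rw [Finset.mem_union, hA'def, hB'def, mem_filter, mem_filter] at ha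
      rw [hPdef, mem_filter] at hb
      omega
    have hcardU : (A' ∪ B' ∪ P).card = n := by
      rw [Finset.card_union_of_disjoint hd2, Finset.card_union_of_disjoint hd1,
        hA, hBc, hpend]
      omega
    have huniv : A' ∪ B' ∪ P = univ := by
      apply Finset.eq_univ_of_card
      rw [hcardU, Fintype.card_fin]
    have hZnat : mZ2 G = ∏ v : Fin n, (G.degree v) ^ (G.degree v) := by
      rw [mZ2]
      exact Finset.prod_congr rfl (fun v _ => by rw [hmdeg])
    rw [hZnat, ← huniv, Finset.prod_union hd2, Finset.prod_union hd1]
    have e1 : ∏ v ∈ A', (G.degree v) ^ (G.degree v) = (k+1)^(r*(k+1)) := by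
      have h1 : ∏ v ∈ A', (G.degree v) ^ (G.degree v) = ∏ _v ∈ A', (k+1)^(k+1) := by
        apply Finset.prod_congr rfl
        intro v hv
        simp only [hA'def, mem_filter] at hv
        rw [hv.2]
      rw [h1, Finset.prod_const, hA, ← pow_mul, mul_comm]
    have e2 : ∏ v ∈ B', (G.degree v) ^ (G.degree v) = k^(k*(n-p-r)) := by
      have h1 : ∏ v ∈ B', (G.degree v) ^ (G.degree v) = ∏ _v ∈ B', k^k := by
        apply Finset.prod_congr rfl
        intro v hv
        simp only [hB'def, mem_filter] at hv
        rw [hv.2]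
      rw [h1, Finset.prod_const, hBc, ← pow_mul]
    have e3 : ∏ v ∈ P, (G.degree v) ^ (G.degree v) = 1 := by
      apply Finset.prod_eq_one
      intro v hv
      simp only [hPdef, mem_filter] at hv
      rw [hv.2]
      norm_num
    rw [e1, e2, e3, hB, mul_one]
  -- forward direction
  have hfwd : mZ2 G = B → G.IsTree ∧
      (univ.filter (fun v => G.degree v = k+1)).card = r ∧
      (univ.filter (fun v => G.degree v = k)).card = n - p - r := by
    intro heq
    have hlogeq : Real.log (mZ2 G : ℝ) = Real.log (B:ℝ) := by rw [heq]
    -- all degrees in T are k or k+1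
    have hall : ∀ v ∈ T, G.degree v = k ∨ G.degree v = k + 1 := by
      by_contra hcon
      push_neg at hcon
      obtain ⟨v0, hv0, hne1, hne2⟩ := hcon
      have hstrict : ∑ v ∈ T, (gk + ((G.degree v:ℝ) - k) * Δ)
          < ∑ v ∈ T, (G.degree v:ℝ) * Real.log (G.degree v) := by
        apply Finset.sum_lt_sum hlog_pt
        refine ⟨v0, hv0, ?_⟩
        rw [hgk, hDel, hgk1, hgk]
        exact my_chord_strict k _ hk (hdeg1 v0) hne1 hne2
      rw [hL] at hstrict
      have h1 := mul_le_mul_of_nonneg_right hrS hDpos.le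
      rw [hlogZ, hlogB] at hlogeq
      linarith
    -- the degree sum on T is exactly k*m + r
    have hSeq : S = k * m + r := by
      by_contra hcon
      have hlt : k * m + r < S := lt_of_le_of_ne hSlb (fun h => hcon h.symm)
      have hrS' : (r:ℝ) + 1 ≤ (S:ℝ) - (m:ℝ)*k := by
        have : ((k*m + r + 1 : ℕ):ℝ) ≤ (S:ℝ) := by exact_mod_cast hlt
        push_cast at this
        linarith
      have h2 : ((r:ℝ)) * Δ < ((S:ℝ) - (m:ℝ)*k) * Δ := by
        apply mul_lt_mul_of_pos_right _ hDpos
        linarith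
      have h3 := Finset.sum_le_sum hlog_pt
      rw [hL] at h3
      rw [hlogZ, hlogB] at hlogeq
      linarith
    have htree : G.IsTree := by
      apply my_tree_of_card G hG
      rw [Fintype.card_fin]
      omega
    -- counting
    set A : Finset (Fin n) := T.filter (fun v => G.degree v = k+1) with hAdef
    set Tc : Finset (Fin n) := T.filter (fun v => ¬ G.degree v = k+1) with hTcdef
    have hsplitS : S = ∑ v ∈ A, G.degree v + ∑ v ∈ Tc, G.degree v := by
      rw [hSdef, ← Finset.sum_filter_add_sum_filter_not T (fun v => G.degree v = k+1)]
    have hsumA : ∑ v ∈ A, G.degree v = A.card * (k+1) := by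
      have h1 : ∑ v ∈ A, G.degree v = ∑ _v ∈ A, (k+1) := by
        apply Finset.sum_congr rfl
        intro v hv
        simp only [hAdef, mem_filter] at hv
        rw [hv.2]
      rw [h1, Finset.sum_const, smul_eq_mul]
    have hsumTc : ∑ v ∈ Tc, G.degree v = Tc.card * k := by
      have h1 : ∑ v ∈ Tc, G.degree v = ∑ _v ∈ Tc, k := by
        apply Finset.sum_congr rfl
        intro v hv
        simp only [hTcdef, mem_filter] at hv
        rcases hall v hv.1 with h | h
        · rw [h]
        · exact absurd h hv.2
      rw [h1, Finset.sum_const, smul_eq_mul]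
    have hATc : A.card + Tc.card = m := by
      rw [hAdef, hTcdef, Finset.card_filter_add_card_filter_not, hTcard]
    have h1 : S = k * m + A.card := by
      rw [hsplitS, hsumA, hsumTc, ← hATc]
      ring
    have hAr : A.card = r := by
      rw [hSeq] at h1
      omega
    have hTcr : Tc.card = n - p - r := by omega
    refine ⟨htree, ?_, ?_⟩
    · rw [← hAr]
      apply congrArg Finset.card
      ext v
      simp only [hAdef, hTdef, mem_filter, mem_univ, true_and]
      constructor
      · intro h2
        exact ⟨by omega, h2⟩
      · rintro ⟨h1, h2⟩
        exact h2
    · rw [← hTcr]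
      apply congrArg Finset.card
      ext v
      simp only [hTcdef, hTdef, mem_filter, mem_univ, true_and]
      constructor
      · intro h2
        exact ⟨by omega, by omega⟩
      · rintro ⟨h1, h2⟩
        rcases hall v (by simp only [hTdef, mem_filter, mem_univ, true_and]; exact h1) with h | h
        · exact h
        · exact absurd h h2
  have hccard : ∀ c : ℕ, Nat.card {v : Fin n | mdeg G v = c}
      = (univ.filter (fun v => G.degree v = c)).card := by
    intro c
    rw [hsetK c, nat_card_setOf]
  refine ⟨hle, ?_, ?_⟩
  · intro heq
    obtain ⟨ht, h1, h2⟩ := hfwd heq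
    exact ⟨ht, by rw [hccard]; exact h1, by rw [hccard]; exact h2⟩
  · rintro ⟨ht, h1, h2⟩
    exact hback (by rw [← hccard (k+1)]; exact h1) (by rw [← hccard k]; exact h2)
end
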